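/- Let ℓ : ℝ^d × Y → [0, C₂] be C₁-Lipschitz in its first argument, W linear with ‖W‖ ≤ B. Fix label y and groups g₁,…,g_m all with label y, with finite samples G₁,…,G_m, each G_i an i.i.d. sample of size n_i from distribution P_{g_i}, and suppose the pairwise empirical alignment loss max_{i≠j} L_align(G_i, G_j) ≤ α. Then with probability at least 1 − δ, for every pair i ≠ j, the difference of population expected losses satisfies |E_{x∼P_{g_i}} ℓ(W f_enc(x), y) − E_{x∼P_{g_j}} ℓ(W f_enc(x), y)| ≤ B·C₁·α + C₂(√(2 log(m/δ)/n_i) + √(2 log(m/δ)/n_j)). -/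

import Mathlib

open MeasureTheory ProbabilityTheory
open Real


lemma hoeff_scalar {p : ℝ} (hp0 : 0 ≤ p) (hp1 : p ≤ 1) (u : ℝ) :
    1 - p + p * Real.exp u ≤ Real.exp (p * u + u ^ 2 / 8) := by
  have hD : ∀ v : ℝ, 0 < 1 - p + p * Real.exp v := by
    intro v
    rcases lt_or_eq_of_le hp1 with h | h
    · have h1 : 0 < 1 - p := by linarith
      have h2 : 0 ≤ p * Real.exp v := mul_nonneg hp0 (Real.exp_pos v).le
      linarith
    · subst h; simpa using Real.exp_pos v
  set D : ℝ → ℝ := fun v => 1 - p + p * Real.exp v with hDdef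
  set G : ℝ → ℝ := fun v => p + v / 4 - p * Real.exp v / D v with hGdef
  set F : ℝ → ℝ := fun v => p * v + v ^ 2 / 8 - Real.log (D v) with hFdef
  have hDd : ∀ v : ℝ, HasDerivAt D (p * Real.exp v) v := by
    intro v
    exact ((Real.hasDerivAt_exp v).const_mul p).const_add (1 - p)
  have hFd : ∀ v : ℝ, HasDerivAt F (G v) v := by
    intro v
    have h1 : HasDerivAt (fun v : ℝ => p * v) p v := by
      simpa using (hasDerivAt_id v).const_mul p
    have h2 : HasDerivAt (fun v : ℝ => v ^ 2 / 8) (v / 4) v := by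
      have := (hasDerivAt_pow 2 v).div_const 8
      simpa using this.congr_deriv (by ring)
    have h3 : HasDerivAt (fun v => Real.log (D v)) (p * Real.exp v / D v) v :=
      (hDd v).log (hD v).ne'
    exact (h1.add h2).sub h3
  have hGd : ∀ v : ℝ, HasDerivAt G (1 / 4 - (p * Real.exp v * D v - p * Real.exp v * (p * Real.exp v)) / (D v) ^ 2) v := by
    intro v
    have h1 : HasDerivAt (fun v : ℝ => p + v / 4) (1 / 4) v := by
      simpa using ((hasDerivAt_id v).div_const 4).const_add p
    have h2 : HasDerivAt (fun v => p * Real.exp v / D v)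
        ((p * Real.exp v * D v - p * Real.exp v * (p * Real.exp v)) / (D v) ^ 2) v :=
      (((Real.hasDerivAt_exp v).const_mul p)).div (hDd v) (hD v).ne'
    exact h1.sub h2
  have hG0 : G 0 = 0 := by
    simp [hGdef, hDdef]
  have hGmono : Monotone G := by
    refine monotone_of_deriv_nonneg (fun v => (hGd v).differentiableAt) ?_
    intro v
    rw [(hGd v).deriv]
    have hpe : 0 ≤ p * Real.exp v := mul_nonneg hp0 (Real.exp_pos v).le
    have hDv : 0 < D v := hD v
    rw [sub_nonneg, div_le_iff₀ (by positivity)]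
    have hexp : D v = 1 - p + p * Real.exp v := rfl
    nlinarith [sq_nonneg (D v - 2 * (p * Real.exp v)), sq_nonneg (p * Real.exp v)]
  have hF0 : F 0 = 0 := by simp [hFdef, hDdef]
  have key : ∀ v : ℝ, 0 ≤ F v := by
    intro v
    rcases le_total 0 v with h | h
    · have hmono : MonotoneOn F (Set.Ici (0:ℝ)) := by
        refine monotoneOn_of_deriv_nonneg (convex_Ici 0)
          (fun x _ => (hFd x).differentiableAt.continuousAt.continuousWithinAt) ?_ ?_
        · intro x hx
          exact (hFd x).differentiableAt.differentiableWithinAt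
        · intro x hx
          rw [(hFd x).deriv]
          have : G 0 ≤ G x := hGmono (le_of_lt (by simpa using hx))
          linarith [hG0 ▸ this]
      have := hmono (Set.self_mem_Ici) (Set.mem_Ici.2 h) h
      linarith [hF0 ▸ this]
    · have hanti : AntitoneOn F (Set.Iic (0:ℝ)) := by
        refine antitoneOn_of_deriv_nonpos (convex_Iic 0)
          (fun x _ => (hFd x).differentiableAt.continuousAt.continuousWithinAt) ?_ ?_
        · intro x hx
          exact (hFd x).differentiableAt.differentiableWithinAt
        · intro x hx
          rw [(hFd x).deriv]
          have : G x ≤ G 0 := hGmono (le_of_lt (by simpa using hx))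
          linarith [hG0 ▸ this]
      have := hanti (Set.mem_Iic.2 h) (Set.self_mem_Iic) h
      linarith [hF0 ▸ this]
  have h := key u
  have hlog : Real.log (D u) ≤ p * u + u ^ 2 / 8 := by
    simp only [hFdef] at h; linarith
  calc D u = Real.exp (Real.log (D u)) := (Real.exp_log (hD u)).symm
  _ ≤ Real.exp (p * u + u ^ 2 / 8) := Real.exp_le_exp.2 hlog

lemma mgf_le_hoeffding {Ω : Type*} [MeasurableSpace Ω] {μ : Measure Ω} [IsProbabilityMeasure μ]
    {Z : Ω → ℝ} (hmeas : Measurable Z) {C : ℝ} (hC : 0 < C)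
    (hbdd : ∀ ω, Z ω ∈ Set.Icc 0 C) (t : ℝ) :
    mgf (fun ω => Z ω - ∫ ω', Z ω' ∂μ) μ t ≤ Real.exp (t ^ 2 * C ^ 2 / 8) := by
  have hZint : Integrable Z μ := by
    refine (integrable_const C).mono' hmeas.aestronglyMeasurable (ae_of_all _ fun ω => ?_)
    rw [Real.norm_eq_abs, abs_of_nonneg (hbdd ω).1]
    exact (hbdd ω).2
  set m : ℝ := ∫ ω', Z ω' ∂μ with hm
  have hm0 : 0 ≤ m := integral_nonneg fun ω => (hbdd ω).1
  have hmC : m ≤ C := by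
    have := integral_mono hZint (integrable_const C) (fun ω => (hbdd ω).2)
    simpa using this
  have hptw : ∀ ω, Real.exp (t * Z ω) ≤ 1 + Z ω * ((Real.exp (t * C) - 1) / C) := by
    intro ω
    have h1 : 0 ≤ 1 - Z ω / C := by
      rw [sub_nonneg, div_le_one hC]; exact (hbdd ω).2
    have h2 : 0 ≤ Z ω / C := div_nonneg (hbdd ω).1 hC.le
    have hsum : (1 - Z ω / C) + Z ω / C = 1 := by ring
    have := convexOn_exp.2 (Set.mem_univ (0:ℝ)) (Set.mem_univ (t * C)) h1 h2 hsum
    simp only [smul_eq_mul, mul_zero, zero_add, Real.exp_zero, mul_one] at this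
    have heq : Z ω / C * (t * C) = t * Z ω := by field_simp
    rw [heq] at this
    calc Real.exp (t * Z ω) ≤ (1 - Z ω / C) + Z ω / C * Real.exp (t * C) := this
    _ = 1 + Z ω * ((Real.exp (t * C) - 1) / C) := by field_simp; ring
  have hintexp : Integrable (fun ω => Real.exp (t * Z ω)) μ := by
    refine (integrable_const (Real.exp (|t| * C))).mono'
      ((hmeas.const_mul t).exp).aestronglyMeasurable (ae_of_all _ fun ω => ?_)
    rw [Real.norm_eq_abs, abs_of_pos (Real.exp_pos _), Real.exp_le_exp]
    calc t * Z ω ≤ |t| * Z ω := mul_le_mul_of_nonneg_right (le_abs_self t) (hbdd ω).1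
    _ ≤ |t| * C := mul_le_mul_of_nonneg_left (hbdd ω).2 (abs_nonneg t)
  have hintRHS : Integrable (fun ω => 1 + Z ω * ((Real.exp (t * C) - 1) / C)) μ :=
    (integrable_const 1).add (hZint.mul_const _)
  have hIle : ∫ ω, Real.exp (t * Z ω) ∂μ ≤ 1 + m * ((Real.exp (t * C) - 1) / C) := by
    calc ∫ ω, Real.exp (t * Z ω) ∂μ ≤ ∫ ω, (1 + Z ω * ((Real.exp (t * C) - 1) / C)) ∂μ :=
      integral_mono hintexp hintRHS hptw
    _ = 1 + m * ((Real.exp (t * C) - 1) / C) := by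
      rw [integral_add (integrable_const 1) (hZint.mul_const _), integral_const,
        integral_mul_const]
      simp [hm]
  have hmgf : mgf (fun ω => Z ω - m) μ t
      = Real.exp (-(t * m)) * ∫ ω, Real.exp (t * Z ω) ∂μ := by
    rw [mgf, ← integral_const_mul]
    congr 1 with ω
    rw [← Real.exp_add]
    ring_nf
  have hp0 : 0 ≤ m / C := div_nonneg hm0 hC.le
  have hp1 : m / C ≤ 1 := (div_le_one hC).2 hmC
  have hkey : 1 + m * ((Real.exp (t * C) - 1) / C)
      ≤ Real.exp ((m / C) * (t * C) + (t * C) ^ 2 / 8) := by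
    have := hoeff_scalar hp0 hp1 (t * C)
    calc 1 + m * ((Real.exp (t * C) - 1) / C)
        = 1 - m / C + (m / C) * Real.exp (t * C) := by field_simp; ring
    _ ≤ _ := this
  rw [hmgf]
  calc Real.exp (-(t * m)) * ∫ ω, Real.exp (t * Z ω) ∂μ
      ≤ Real.exp (-(t * m)) * Real.exp ((m / C) * (t * C) + (t * C) ^ 2 / 8) := by
        refine mul_le_mul_of_nonneg_left (hIle.trans hkey) (Real.exp_pos _).le
  _ = Real.exp (-(t * m) + ((m / C) * (t * C) + (t * C) ^ 2 / 8)) := (Real.exp_add _ _).symm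
  _ = Real.exp (t ^ 2 * C ^ 2 / 8) := by
      congr 1
      field_simp
      ring

lemma hoeffding_onesided {Ω : Type*} [MeasurableSpace Ω] {μ : Measure Ω} [IsProbabilityMeasure μ]
    {n : ℕ} {Z : Fin n → Ω → ℝ} (hmeas : ∀ k, Measurable (Z k))
    (hindep : iIndepFun Z μ)
    {C : ℝ} (hC : 0 < C) (hbdd : ∀ k ω, Z k ω ∈ Set.Icc 0 C)
    {ε : ℝ} (hε : 0 ≤ ε) :
    μ {ω | (n : ℝ) * ε ≤ ∑ k, (Z k ω - ∫ ω', Z k ω' ∂μ)} ≤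
      ENNReal.ofReal (Real.exp (-(2 * n * ε ^ 2 / C ^ 2))) := by
  classical
  set m : Fin n → ℝ := fun k => ∫ ω', Z k ω' ∂μ with hmdef
  have hm_mem : ∀ k, m k ∈ Set.Icc 0 C := by
    intro k
    have hZint : Integrable (Z k) μ := by
      refine (integrable_const C).mono' (hmeas k).aestronglyMeasurable (ae_of_all _ fun ω => ?_)
      rw [Real.norm_eq_abs, abs_of_nonneg (hbdd k ω).1]
      exact (hbdd k ω).2
    constructor
    · exact integral_nonneg fun ω => (hbdd k ω).1
    · have := integral_mono hZint (integrable_const C) (fun ω => (hbdd k ω).2)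
      simpa using this
  set Zc : Fin n → Ω → ℝ := fun k ω => Z k ω - m k with hZcdef
  have hmeasZc : ∀ k, Measurable (Zc k) := fun k => (hmeas k).sub_const _
  have hindepZc : iIndepFun Zc μ := by
    have := hindep.comp (fun k (x : ℝ) => x - m k) (fun k => measurable_id.sub_const _)
    exact this
  set T : Ω → ℝ := ∑ k, Zc k with hTdef
  have hTapp : ∀ ω, T ω = ∑ k, (Z k ω - m k) := by
    intro ω; simp [hTdef, hZcdef, Finset.sum_apply]
  have hTbdd : ∀ ω, |T ω| ≤ n * C := by
    intro ω
    rw [hTapp]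
    calc |∑ k, (Z k ω - m k)| ≤ ∑ k, |Z k ω - m k| := Finset.abs_sum_le_sum_abs _ _
    _ ≤ ∑ _k : Fin n, C := by
        refine Finset.sum_le_sum fun k _ => ?_
        rw [abs_le]
        constructor
        · linarith [(hbdd k ω).1, (hm_mem k).2]
        · linarith [(hbdd k ω).2, (hm_mem k).1]
    _ = n * C := by simp [mul_comm]
  set t : ℝ := 4 * ε / C ^ 2 with htdef
  have ht : 0 ≤ t := by positivity
  have hmeasT : Measurable T := by
    have h : Measurable fun ω => ∑ k, Zc k ω := Finset.measurable_sum _ fun k _ => hmeasZc k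
    rw [hTdef, show (∑ k, Zc k : Ω → ℝ) = fun ω => ∑ k, Zc k ω from by ext ω; simp]
    exact h
  have hintT : Integrable (fun ω => Real.exp (t * T ω)) μ := by
    refine (integrable_const (Real.exp (t * (n * C)))).mono'
      ((hmeasT.const_mul t).exp).aestronglyMeasurable (ae_of_all _ fun ω => ?_)
    rw [Real.norm_eq_abs, abs_of_pos (Real.exp_pos _), Real.exp_le_exp]
    exact mul_le_mul_of_nonneg_left ((le_abs_self _).trans (hTbdd ω)) ht
  have hch := measure_ge_le_exp_mul_mgf (μ := μ) (X := T) ((n : ℝ) * ε) ht hintT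
  have hmgfsum : mgf T μ t = ∏ k, mgf (Zc k) μ t := hindepZc.mgf_sum hmeasZc Finset.univ
  have hmgfle : ∀ k, mgf (Zc k) μ t ≤ Real.exp (t ^ 2 * C ^ 2 / 8) := fun k =>
    mgf_le_hoeffding (hmeas k) hC (hbdd k) t
  have hprod : ∏ k, mgf (Zc k) μ t ≤ Real.exp (t ^ 2 * C ^ 2 / 8) ^ n := by
    calc ∏ k, mgf (Zc k) μ t ≤ ∏ _k : Fin n, Real.exp (t ^ 2 * C ^ 2 / 8) :=
      Finset.prod_le_prod (fun k _ => mgf_nonneg) (fun k _ => hmgfle k)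
    _ = Real.exp (t ^ 2 * C ^ 2 / 8) ^ n := by simp
  have hfinal : Real.exp (-t * ((n : ℝ) * ε)) * mgf T μ t
      ≤ Real.exp (-(2 * n * ε ^ 2 / C ^ 2)) := by
    rw [hmgfsum]
    calc Real.exp (-t * ((n : ℝ) * ε)) * ∏ k, mgf (Zc k) μ t
        ≤ Real.exp (-t * ((n : ℝ) * ε)) * Real.exp (t ^ 2 * C ^ 2 / 8) ^ n :=
          mul_le_mul_of_nonneg_left hprod (Real.exp_pos _).le
    _ = Real.exp (-t * ((n : ℝ) * ε) + n * (t ^ 2 * C ^ 2 / 8)) := by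
        rw [← Real.exp_nat_mul, ← Real.exp_add]
    _ = Real.exp (-(2 * n * ε ^ 2 / C ^ 2)) := by
        congr 1
        rw [htdef]
        field_simp
        ring
  rw [ENNReal.le_ofReal_iff_toReal_le (measure_ne_top μ _) (Real.exp_pos _).le]
  have hseteq : {ω | (n : ℝ) * ε ≤ ∑ k, (Z k ω - ∫ ω', Z k ω' ∂μ)}
      = {ω | (n : ℝ) * ε ≤ T ω} := by
    ext ω; simp [hTapp ω, hmdef]
  rw [hseteq]
  exact hch.trans hfinal


lemma iIndepFun_precomp {ι κ Ω β : Type*} [MeasurableSpace Ω] [mβ : MeasurableSpace β]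
    {μ : Measure Ω} {f : ι → Ω → β} (hf : iIndepFun f μ)
    {g : κ → ι} (hg : Function.Injective g) :
    iIndepFun (fun k => f (g k)) μ := by
  rw [iIndepFun_iff_measure_inter_preimage_eq_mul] at hf ⊢
  intro T sets hsets
  classical
  set sets' : ι → Set β := Function.extend g sets (fun _ => Set.univ) with hs'
  have happ : ∀ k, sets' (g k) = sets k := fun k => hg.extend_apply _ _ _
  have hmeas' : ∀ i ∈ T.image g, MeasurableSet (sets' i) := by
    intro i hi
    obtain ⟨k, hk, rfl⟩ := Finset.mem_image.1 hi
    rw [happ]; exact hsets k hk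
  have h := hf (T.image g) hmeas'
  have hInter : ⋂ i ∈ T.image g, f i ⁻¹' sets' i = ⋂ k ∈ T, f (g k) ⁻¹' sets k := by
    ext ω
    simp only [Set.mem_iInter, Finset.mem_image, forall_exists_index, and_imp]
    constructor
    · intro hmem k hk
      have := hmem (g k) k hk rfl
      rwa [happ] at this
    · rintro hmem i k hk rfl
      rw [happ]; exact hmem k hk
  have hProd : ∏ i ∈ T.image g, μ (f i ⁻¹' sets' i) = ∏ k ∈ T, μ (f (g k) ⁻¹' sets k) := by
    rw [Finset.prod_image (fun a _ b _ hab => hg hab)]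
    exact Finset.prod_congr rfl fun k _ => by rw [happ]
  rw [← hInter, h, hProd]

set_option maxHeartbeats 1000000 in
theorem stmt15 {X : Type*} [MeasurableSpace X] {Ω : Type*} [MeasureSpace Ω]
    [IsProbabilityMeasure (ℙ : Measure Ω)]
    {d d' : ℕ} {Y : Type*} (ℓ : EuclideanSpace ℝ (Fin d') → Y → ℝ) (y : Y)
    (C₁ C₂ B α δ : ℝ) (hC₁ : 0 ≤ C₁) (hC₂ : 0 < C₂) (hα : 0 ≤ α)
    (hδ : δ ∈ Set.Ioo (0 : ℝ) 1)
    (W : EuclideanSpace ℝ (Fin d) →L[ℝ] EuclideanSpace ℝ (Fin d')) (hW : ‖W‖ ≤ B)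
    (hLip : ∀ z z' y', |ℓ z y' - ℓ z' y'| ≤ C₁ * ‖z - z'‖)
    (hbdd : ∀ z y', ℓ z y' ∈ Set.Icc 0 C₂)
    (f_enc : X → EuclideanSpace ℝ (Fin d)) (hf : Measurable f_enc)
    (m : ℕ) (n : Fin m → ℕ) (hn : ∀ i, 0 < n i)
    (P : Fin m → Measure X) (hP : ∀ i, IsProbabilityMeasure (P i))
    (S : ∀ i : Fin m, Fin (n i) → Ω → X) (hSmeas : ∀ i k, Measurable (S i k))
    (hlaw : ∀ i k, Measure.map (S i k) ℙ = P i)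
    (hindep : iIndepFun
      (fun pr : Σ i : Fin m, Fin (n i) => S pr.1 pr.2) ℙ) :
    ENNReal.ofReal (1 - δ) ≤ ℙ {ω |
      (∀ i j : Fin m, i ≠ j →
        (1 / ((n i : ℝ) * n j)) * ∑ k, ∑ l, ‖f_enc (S i k ω) - f_enc (S j l ω)‖ ≤ α) →
      ∀ i j : Fin m, i ≠ j →
        |(∫ x, ℓ (W (f_enc x)) y ∂(P i)) - ∫ x, ℓ (W (f_enc x)) y ∂(P j)| ≤
          B * C₁ * α + C₂ * (Real.sqrt (2 * Real.log (m / δ) / n i) +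
            Real.sqrt (2 * Real.log (m / δ) / n j))} := by
  obtain ⟨hδ0, hδ1⟩ := hδ
  rcases le_or_gt m 1 with hm1 | hm2
  · -- trivial case: no pairs i ≠ j
    have hset : {ω : Ω |
        (∀ i j : Fin m, i ≠ j →
          (1 / ((n i : ℝ) * n j)) * ∑ k, ∑ l, ‖f_enc (S i k ω) - f_enc (S j l ω)‖ ≤ α) →
        ∀ i j : Fin m, i ≠ j →
          |(∫ x, ℓ (W (f_enc x)) y ∂(P i)) - ∫ x, ℓ (W (f_enc x)) y ∂(P j)| ≤
            B * C₁ * α + C₂ * (Real.sqrt (2 * Real.log (m / δ) / n i) +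
              Real.sqrt (2 * Real.log (m / δ) / n j))} = Set.univ := by
      ext ω
      simp only [Set.mem_setOf_eq, Set.mem_univ, iff_true]
      intro _ i j hij
      exact absurd (Fin.ext (by omega : i.val = j.val)) hij
    rw [hset, measure_univ]
    exact ENNReal.ofReal_le_one.2 (by linarith)
  -- main case : 2 ≤ m
  have hm2' : (2 : ℝ) ≤ m := by exact_mod_cast hm2
  have hB0 : 0 ≤ B := le_trans (norm_nonneg W) hW
  -- the loss composed with the encoder
  set φ : X → ℝ := fun x => ℓ (W (f_enc x)) y with hφdef
  have hlip' : LipschitzWith (Real.toNNReal C₁) (fun z => ℓ z y) := by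
    refine LipschitzWith.of_dist_le_mul fun z z' => ?_
    rw [Real.dist_eq, dist_eq_norm, Real.coe_toNNReal _ hC₁]
    exact hLip z z' y
  have hφm : Measurable φ :=
    hlip'.continuous.measurable.comp (W.continuous.measurable.comp hf)
  set Z : ∀ i : Fin m, Fin (n i) → Ω → ℝ := fun i k ω => φ (S i k ω) with hZdef
  have hZmeas : ∀ i k, Measurable (Z i k) := fun i k => hφm.comp (hSmeas i k)
  have hZmem : ∀ i k ω, Z i k ω ∈ Set.Icc 0 C₂ := fun i k ω => hbdd _ y
  have hZint : ∀ i k, Integrable (Z i k) ℙ := by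
    intro i k
    refine (integrable_const C₂).mono' (hZmeas i k).aestronglyMeasurable
      (ae_of_all _ fun ω => ?_)
    rw [Real.norm_eq_abs, abs_of_nonneg (hZmem i k ω).1]
    exact (hZmem i k ω).2
  set μv : Fin m → ℝ := fun i => ∫ x, φ x ∂(P i) with hμvdef
  have hmean : ∀ i k, ∫ ω, Z i k ω ∂ℙ = μv i := by
    intro i k
    rw [hμvdef]
    simp only
    rw [← hlaw i k, integral_map (hSmeas i k).aemeasurable hφm.aestronglyMeasurable]
  -- per-group independence
  have hind : ∀ i, iIndepFun (fun k => Z i k) ℙ := by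
    intro i
    have hinj : Function.Injective (fun k : Fin (n i) => (⟨i, k⟩ : Σ i : Fin m, Fin (n i))) := by
      intro a b hab
      simpa using hab
    have h1 := iIndepFun_precomp hindep hinj
    exact h1.comp (fun _ => φ) (fun _ => hφm)
  -- the deviation bound
  set L : ℝ := Real.log (m / δ) with hLdef
  have hmδ : (1 : ℝ) < m / δ := by
    rw [lt_div_iff₀ hδ0]
    nlinarith
  have hL : 0 < L := Real.log_pos hmδ
  set ε : Fin m → ℝ := fun i => C₂ * Real.sqrt (2 * L / n i) with hεdef
  have hε0 : ∀ i, 0 ≤ ε i := fun i => by positivity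
  -- good events
  set A : Fin m → Set Ω := fun i => {ω | |∑ k, (Z i k ω - μv i)| ≤ (n i : ℝ) * ε i} with hAdef
  have hAmeas : ∀ i, MeasurableSet (A i) := by
    intro i
    exact measurableSet_le
      ((Finset.measurable_sum _ fun k _ => (hZmeas i k).sub_const _).abs) measurable_const
  -- tail bound for each group
  have htail : ∀ i, ℙ (A i)ᶜ ≤ ENNReal.ofReal (δ / m) := by
    intro i
    have hni : (0 : ℝ) < n i := by exact_mod_cast hn i
    -- the upper-tail event
    have hup : ℙ {ω | (n i : ℝ) * ε i ≤ ∑ k, (Z i k ω - ∫ ω', Z i k ω' ∂ℙ)} ≤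
        ENNReal.ofReal (Real.exp (-(2 * (n i) * (ε i) ^ 2 / C₂ ^ 2))) :=
      hoeffding_onesided (hZmeas i) (hind i) hC₂ (fun k ω => hZmem i k ω) (hε0 i)
    -- the lower-tail event via C₂ - Z
    set Z' : Fin (n i) → Ω → ℝ := fun k ω => C₂ - Z i k ω with hZ'def
    have hZ'meas : ∀ k, Measurable (Z' k) := fun k => (measurable_const.sub (hZmeas i k))
    have hZ'mem : ∀ k ω, Z' k ω ∈ Set.Icc 0 C₂ := by
      intro k ω
      simp only [hZ'def, Set.mem_Icc]
      constructor
      · linarith [(hZmem i k ω).2]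
      · linarith [(hZmem i k ω).1]
    have hZ'ind : iIndepFun Z' ℙ :=
      (hind i).comp (fun _ (x : ℝ) => C₂ - x) (fun _ => measurable_const.sub measurable_id)
    have hZ'int : ∀ k, ∫ ω', Z' k ω' ∂ℙ = C₂ - μv i := by
      intro k
      rw [hZ'def]
      simp only
      rw [integral_sub (integrable_const C₂) (hZint i k), integral_const, hmean i k]
      simp
    have hdown := hoeffding_onesided hZ'meas hZ'ind hC₂ hZ'mem (hε0 i)
    have hdown_eq : {ω | (n i : ℝ) * ε i ≤ ∑ k, (Z' k ω - ∫ ω', Z' k ω' ∂ℙ)} =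
        {ω | (n i : ℝ) * ε i ≤ -∑ k, (Z i k ω - μv i)} := by
      ext ω
      simp only [Set.mem_setOf_eq]
      have : ∑ k, (Z' k ω - ∫ ω', Z' k ω' ∂ℙ) = -∑ k, (Z i k ω - μv i) := by
        rw [← Finset.sum_neg_distrib]
        refine Finset.sum_congr rfl fun k _ => ?_
        rw [hZ'int k, hZ'def]
        ring_nf
      rw [this]
    rw [hdown_eq] at hdown
    -- inclusion of the bad event in the two tails
    have hincl : (A i)ᶜ ⊆
        {ω | (n i : ℝ) * ε i ≤ ∑ k, (Z i k ω - ∫ ω', Z i k ω' ∂ℙ)} ∪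
        {ω | (n i : ℝ) * ε i ≤ -∑ k, (Z i k ω - μv i)} := by
      intro ω hω
      simp only [hAdef, Set.mem_compl_iff, Set.mem_setOf_eq, not_le] at hω
      have hmean' : ∀ k, ∫ ω', Z i k ω' ∂ℙ = μv i := fun k => hmean i k
      rcases abs_cases (∑ k, (Z i k ω - μv i)) with ⟨heq, _⟩ | ⟨heq, _⟩
      · left
        simp only [Set.mem_setOf_eq]
        have : (n i : ℝ) * ε i ≤ ∑ k, (Z i k ω - μv i) := by rw [← heq]; exact hω.le
        refine this.trans_eq (Finset.sum_congr rfl fun k _ => by rw [hmean' k])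
      · right
        simp only [Set.mem_setOf_eq]
        rw [← heq]
        exact hω.le
    -- numeric bound on the exponential
    have hexp_le : Real.exp (-(2 * (n i) * (ε i) ^ 2 / C₂ ^ 2)) ≤ δ / (2 * m) := by
      have hsq : (ε i) ^ 2 = C₂ ^ 2 * (2 * L / n i) := by
        rw [hεdef]
        simp only
        rw [mul_pow, Real.sq_sqrt (by positivity)]
      have hexparg : -(2 * (n i) * (ε i) ^ 2 / C₂ ^ 2) = -(4 * L) := by
        rw [hsq]
        field_simp
        ring
      rw [hexparg]
      have hexpL : Real.exp L = m / δ := Real.exp_log (by positivity)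
      have h4 : Real.exp (-(4 * L)) = (δ / m) ^ 4 := by
        rw [Real.exp_neg, show (4 : ℝ) * L = ((4 : ℕ) : ℝ) * L by norm_num,
          Real.exp_nat_mul, hexpL, ← inv_pow, inv_div]
      rw [h4, div_pow, div_le_div_iff₀ (by positivity) (by positivity)]
      have hm0 : (0 : ℝ) < m := by linarith
      have hd4 : δ ^ 4 ≤ δ := by
        simpa using pow_le_pow_of_le_one hδ0.le hδ1.le (by norm_num : 1 ≤ 4)
      have hm4 : 2 * (m : ℝ) ≤ (m : ℝ) ^ 4 := by
        nlinarith [sq_nonneg ((m : ℝ) - 2), sq_nonneg ((m : ℝ) + 2), sq_nonneg ((m : ℝ))]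
      calc δ ^ 4 * (2 * m) ≤ δ * (2 * m) := by nlinarith
      _ ≤ δ * m ^ 4 := by nlinarith
    calc ℙ (A i)ᶜ ≤ ℙ ({ω | (n i : ℝ) * ε i ≤ ∑ k, (Z i k ω - ∫ ω', Z i k ω' ∂ℙ)} ∪
        {ω | (n i : ℝ) * ε i ≤ -∑ k, (Z i k ω - μv i)}) := measure_mono hincl
    _ ≤ ℙ {ω | (n i : ℝ) * ε i ≤ ∑ k, (Z i k ω - ∫ ω', Z i k ω' ∂ℙ)} +
        ℙ {ω | (n i : ℝ) * ε i ≤ -∑ k, (Z i k ω - μv i)} := measure_union_le _ _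
    _ ≤ ENNReal.ofReal (Real.exp (-(2 * (n i) * (ε i) ^ 2 / C₂ ^ 2))) +
        ENNReal.ofReal (Real.exp (-(2 * (n i) * (ε i) ^ 2 / C₂ ^ 2))) := add_le_add hup hdown
    _ ≤ ENNReal.ofReal (δ / (2 * m)) + ENNReal.ofReal (δ / (2 * m)) :=
        add_le_add (ENNReal.ofReal_le_ofReal hexp_le) (ENNReal.ofReal_le_ofReal hexp_le)
    _ = ENNReal.ofReal (δ / (2 * m) + δ / (2 * m)) :=
        (ENNReal.ofReal_add (by positivity) (by positivity)).symm
    _ = ENNReal.ofReal (δ / m) := by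
        congr 1
        rw [← add_div, show δ + δ = 2 * δ by ring,
          mul_div_mul_left δ (m : ℝ) two_ne_zero]
  -- probability of the good event
  set G : Set Ω := ⋂ i, A i with hGdef
  have hGmeas : MeasurableSet G := MeasurableSet.iInter fun i => hAmeas i
  have hGc : ℙ Gᶜ ≤ ENNReal.ofReal δ := by
    have h1 : Gᶜ = ⋃ i, (A i)ᶜ := by rw [hGdef, Set.compl_iInter]
    rw [h1]
    calc ℙ (⋃ i, (A i)ᶜ) ≤ ∑' i, ℙ (A i)ᶜ := measure_iUnion_le _
    _ = ∑ i, ℙ (A i)ᶜ := tsum_fintype _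
    _ ≤ ∑ _i : Fin m, ENNReal.ofReal (δ / m) := Finset.sum_le_sum fun i _ => htail i
    _ = (m : ENNReal) * ENNReal.ofReal (δ / m) := by
        rw [Finset.sum_const, Finset.card_univ, Fintype.card_fin, nsmul_eq_mul]
    _ = ENNReal.ofReal δ := by
        rw [← ENNReal.ofReal_natCast m, ← ENNReal.ofReal_mul (by positivity)]
        congr 1
        field_simp
  have hGlb : ENNReal.ofReal (1 - δ) ≤ ℙ G := by
    have hsum := prob_add_prob_compl (μ := (ℙ : Measure Ω)) hGmeas
    have h2 : (1 : ENNReal) ≤ ℙ G + ENNReal.ofReal δ := by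
      rw [← hsum]
      exact add_le_add_right hGc _
    have h3 : ENNReal.ofReal (1 - δ) = 1 - ENNReal.ofReal δ := by
      rw [ENNReal.ofReal_sub _ hδ0.le, ENNReal.ofReal_one]
    rw [h3]
    exact tsub_le_iff_right.2 h2
  refine hGlb.trans (measure_mono ?_)
  -- the deterministic part : the good event implies the conclusion
  intro ω hω
  simp only [Set.mem_setOf_eq]
  intro Halign i j hij
  have hωA : ∀ i, |∑ k, (Z i k ω - μv i)| ≤ (n i : ℝ) * ε i := by
    intro i'
    have := Set.mem_iInter.1 hω i'
    simpa [hAdef] using this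
  have hni : (0 : ℝ) < n i := by exact_mod_cast hn i
  have hnj : (0 : ℝ) < n j := by exact_mod_cast hn j
  set si : ℝ := ∑ k, Z i k ω with hsidef
  set sj : ℝ := ∑ l, Z j l ω with hsjdef
  have h1 : |(n i : ℝ) * μv i - si| ≤ (n i : ℝ) * ε i := by
    have := hωA i
    rw [Finset.sum_sub_distrib, Finset.sum_const, Finset.card_univ, Fintype.card_fin,
      nsmul_eq_mul, abs_sub_comm] at this
    exact this
  have h3 : |(n j : ℝ) * μv j - sj| ≤ (n j : ℝ) * ε j := by
    have := hωA j
    rw [Finset.sum_sub_distrib, Finset.sum_const, Finset.card_univ, Fintype.card_fin,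
      nsmul_eq_mul, abs_sub_comm] at this
    exact this
  -- the empirical alignment controls the difference of empirical means
  have hsum_align : ∑ k, ∑ l, ‖f_enc (S i k ω) - f_enc (S j l ω)‖ ≤ α * ((n i : ℝ) * n j) := by
    have h := Halign i j hij
    rw [one_div, inv_mul_eq_div, div_le_iff₀ (by positivity)] at h
    exact h
  have hterm : ∀ (k : Fin (n i)) (l : Fin (n j)),
      |Z i k ω - Z j l ω| ≤ B * C₁ * ‖f_enc (S i k ω) - f_enc (S j l ω)‖ := by
    intro k l
    have ha := hLip (W (f_enc (S i k ω))) (W (f_enc (S j l ω))) y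
    have hb : ‖W (f_enc (S i k ω)) - W (f_enc (S j l ω))‖ ≤
        B * ‖f_enc (S i k ω) - f_enc (S j l ω)‖ := by
      rw [← map_sub W (f_enc (S i k ω)) (f_enc (S j l ω))]
      calc ‖W (f_enc (S i k ω) - f_enc (S j l ω))‖ ≤
          ‖W‖ * ‖f_enc (S i k ω) - f_enc (S j l ω)‖ :=
            W.le_opNorm (f_enc (S i k ω) - f_enc (S j l ω))
      _ ≤ B * ‖f_enc (S i k ω) - f_enc (S j l ω)‖ := by
            exact mul_le_mul_of_nonneg_right hW
              (norm_nonneg (f_enc (S i k ω) - f_enc (S j l ω)))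
    calc |Z i k ω - Z j l ω| ≤ C₁ * ‖W (f_enc (S i k ω)) - W (f_enc (S j l ω))‖ := ha
    _ ≤ C₁ * (B * ‖f_enc (S i k ω) - f_enc (S j l ω)‖) :=
        mul_le_mul_of_nonneg_left hb hC₁
    _ = B * C₁ * ‖f_enc (S i k ω) - f_enc (S j l ω)‖ := by ring
  have h2 : |(n j : ℝ) * si - (n i : ℝ) * sj| ≤ B * C₁ * α * ((n i : ℝ) * n j) := by
    have hsum_eq : ∑ k, ∑ l, (Z i k ω - Z j l ω) = (n j : ℝ) * si - (n i : ℝ) * sj := by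
      rw [hsidef, hsjdef]
      simp only [Finset.sum_sub_distrib, Finset.sum_const, Finset.card_univ, Fintype.card_fin,
        nsmul_eq_mul, Finset.mul_sum]
    rw [← hsum_eq]
    calc |∑ k, ∑ l, (Z i k ω - Z j l ω)| ≤ ∑ k, ∑ l, |Z i k ω - Z j l ω| := by
          exact (Finset.abs_sum_le_sum_abs _ _).trans
            (Finset.sum_le_sum fun k _ => Finset.abs_sum_le_sum_abs _ _)
    _ ≤ ∑ k : Fin (n i), ∑ l : Fin (n j), B * C₁ * ‖f_enc (S i k ω) - f_enc (S j l ω)‖ :=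
        Finset.sum_le_sum fun k _ => Finset.sum_le_sum fun l _ => hterm k l
    _ = B * C₁ * ∑ k, ∑ l, ‖f_enc (S i k ω) - f_enc (S j l ω)‖ := by
        rw [Finset.mul_sum]
        exact Finset.sum_congr rfl fun k _ => by rw [Finset.mul_sum]
    _ ≤ B * C₁ * (α * ((n i : ℝ) * n j)) :=
        mul_le_mul_of_nonneg_left hsum_align (by positivity)
    _ = B * C₁ * α * ((n i : ℝ) * n j) := by ring
  -- put the three bounds together
  have hgoal : |μv i - μv j| ≤ B * C₁ * α + (ε i + ε j) := by
    have hpos : (0 : ℝ) < (n i : ℝ) * n j := by positivity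
    have hkey : |μv i - μv j| * ((n i : ℝ) * n j) ≤
        (B * C₁ * α + (ε i + ε j)) * ((n i : ℝ) * n j) := by
      calc |μv i - μv j| * ((n i : ℝ) * n j)
          = |(μv i - μv j) * ((n i : ℝ) * n j)| := by
            rw [abs_mul, abs_of_pos hpos]
      _ = |((n i : ℝ) * μv i - si) * (n j : ℝ) + ((n j : ℝ) * si - (n i : ℝ) * sj)
            - ((n j : ℝ) * μv j - sj) * (n i : ℝ)| := by
            congr 1
            ring
      _ ≤ |((n i : ℝ) * μv i - si) * (n j : ℝ)| + |(n j : ℝ) * si - (n i : ℝ) * sj|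
            + |((n j : ℝ) * μv j - sj) * (n i : ℝ)| := by
            exact (abs_sub _ _).trans (add_le_add_left (abs_add_le _ _) _)
      _ ≤ ((n i : ℝ) * ε i) * (n j : ℝ) + B * C₁ * α * ((n i : ℝ) * n j)
            + ((n j : ℝ) * ε j) * (n i : ℝ) := by
            refine add_le_add (add_le_add ?_ h2) ?_
            · rw [abs_mul, abs_of_pos hnj]
              exact mul_le_mul_of_nonneg_right h1 hnj.le
            · rw [abs_mul, abs_of_pos hni]
              exact mul_le_mul_of_nonneg_right h3 hni.le
      _ = (B * C₁ * α + (ε i + ε j)) * ((n i : ℝ) * n j) := by ring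
    exact le_of_mul_le_mul_right hkey hpos
  have hrhs : B * C₁ * α + C₂ * (Real.sqrt (2 * Real.log (m / δ) / n i) +
      Real.sqrt (2 * Real.log (m / δ) / n j)) = B * C₁ * α + (ε i + ε j) := by
    rw [hεdef, hLdef]
    ring
  rw [hrhs]
  exact hgoal
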